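/- A Sylow 3-subgroup of PGL(2,9) is elementary abelian of order 9, and in particular is not cyclic. -/

import Mathlib

/-- `PGL(2,9)`: `GL(2, F₉)` modulo its center. -/
abbrev PGL29 : Type :=
  (Matrix.GeneralLinearGroup (Fin 2) (GaloisField 3 2)) ⧸
    Subgroup.center (Matrix.GeneralLinearGroup (Fin 2) (GaloisField 3 2))

attribute [local instance] Fintype.ofFinite

open Matrix

local notation "F9" => GaloisField 3 2
local notation "GL29" => Matrix.GeneralLinearGroup (Fin 2) (GaloisField 3 2)

lemma aux_card_F9 : Nat.card F9 = 9 := by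
  rw [GaloisField.card 3 2 (by norm_num)]
  norm_num

/-- The scalar embedding `F9ˣ →* GL(2,F9)`. -/
noncomputable def sclr : (GaloisField 3 2)ˣ →* Matrix.GeneralLinearGroup (Fin 2) (GaloisField 3 2) :=
  Units.map (Matrix.scalar (Fin 2) : F9 →+* Matrix (Fin 2) (Fin 2) F9).toMonoidHom

lemma sclr_injective : Function.Injective sclr := by
  apply Units.map_injective
  intro a b h
  have := congrArg (fun M : Matrix (Fin 2) (Fin 2) F9 => M 0 0) h
  simpa [Matrix.scalar_apply] using this

lemma aux_center_eq : Subgroup.center GL29 = sclr.range := by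
  ext z
  constructor
  · intro hz
    have hcomm : ∀ t : Matrix.TransvectionStruct (Fin 2) F9, Commute t.toMatrix z.val := by
      intro t
      obtain ⟨u, hu⟩ := (Matrix.isUnit_iff_isUnit_det t.toMatrix).2 (by simp)
      have h := Subgroup.mem_center_iff.1 hz u
      have : (u * z).val = (z * u).val := by rw [h]
      simpa [Units.val_mul, hu, Commute, SemiconjBy] using this
    obtain ⟨c, hc⟩ := Matrix.mem_range_scalar_of_commute_transvectionStruct hcomm
    have hdet : IsUnit z.val.det := (Matrix.isUnit_iff_isUnit_det z.val).1 z.isUnit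
    have hc0 : c ≠ 0 := by
      rintro rfl
      rw [← hc, map_zero, Matrix.det_zero] at hdet
      exact hdet.ne_zero rfl
    refine ⟨Units.mk0 c hc0, ?_⟩
    exact Units.ext (by show Matrix.scalar (Fin 2) c = _; simpa [Matrix.scalar_apply] using hc)
  · rintro ⟨u, rfl⟩
    refine Subgroup.mem_center_iff.2 fun g => ?_
    refine Units.ext ?_
    show g.val * Matrix.scalar (Fin 2) u.val = Matrix.scalar (Fin 2) u.val * g.val
    exact (Matrix.scalar_commute (u : F9) (fun r => mul_comm _ _) g.val).symm

lemma aux_card_center : Nat.card (Subgroup.center GL29) = 8 := by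
  rw [aux_center_eq, Nat.card_congr (MonoidHom.ofInjective sclr_injective).toEquiv.symm,
    Nat.card_units, aux_card_F9]

lemma aux_card_GL : Nat.card GL29 = 5760 := by
  have h9 : Fintype.card F9 = 9 := by rw [← Nat.card_eq_fintype_card]; exact aux_card_F9
  rw [Matrix.card_GL_field, h9]
  decide

lemma aux_card_PGL : Nat.card PGL29 = 720 := by
  have h := Subgroup.card_eq_card_quotient_mul_card_subgroup
    (Subgroup.center GL29)
  rw [aux_card_GL, aux_card_center] at h
  change Nat.card (GL29 ⧸ Subgroup.center GL29) = 720
  omega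

/-- No "element of order 9" in `PGL(2,9)`: ninth roots of `1` are cube roots of `1`. -/
lemma aux_cube (x : PGL29) (hx : x ^ 9 = 1) : x ^ 3 = 1 := by
  obtain ⟨g, rfl⟩ := QuotientGroup.mk_surjective x
  rw [← QuotientGroup.mk_pow, QuotientGroup.eq_one_iff] at hx ⊢
  rw [aux_center_eq] at hx ⊢
  obtain ⟨u, hu⟩ := hx
  set c : F9 := (u : F9) with hcdef
  have hc0 : c ≠ 0 := u.ne_zero
  have hA9 : (g : Matrix (Fin 2) (Fin 2) F9) ^ 9 = c • (1 : Matrix (Fin 2) (Fin 2) F9) := by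
    have := congrArg Units.val hu
    simp only [Units.val_pow_eq_pow_val] at this ⊢
    rw [← this]
    show Matrix.scalar (Fin 2) c = c • 1
    rw [Matrix.scalar_apply, ← Matrix.smul_one_eq_diagonal]
  have hc8 : c ^ 8 = 1 := by
    have := congrArg Units.val (pow_card_eq_one' (G := F9ˣ) (x := u))
    rw [Nat.card_units, aux_card_F9] at this
    simpa using this
  -- the normalized matrix B
  set B : Matrix (Fin 2) (Fin 2) F9 := c⁻¹ • (g : Matrix (Fin 2) (Fin 2) F9) with hB
  have h1 : c⁻¹ ^ 9 * c = 1 := by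
    rw [inv_pow, show c ^ 9 = c ^ 8 * c by ring, hc8, one_mul, inv_mul_cancel₀ hc0]
  have hB9 : B ^ 9 = 1 := by
    rw [hB, smul_pow, hA9, smul_smul, h1, one_smul]
  set N : Matrix (Fin 2) (Fin 2) F9 := B - 1 with hN
  have hN9 : N ^ 9 = 0 := by
    have h92 : (9 : ℕ) = 3 ^ 2 := by norm_num
    rw [hN, h92, sub_pow_char_pow_of_commute 3 2 (Commute.one_right B), ← h92, hB9, one_pow,
      sub_self]
  have hN2 : N ^ 2 = 0 := by
    have hnil : IsNilpotent N := ⟨9, hN9⟩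
    have h1 := Matrix.isNilpotent_charpoly_sub_pow_of_isNilpotent hnil
    have h2 : N.charpoly - Polynomial.X ^ (Fintype.card (Fin 2)) = 0 := h1.eq_zero
    rw [sub_eq_zero] at h2
    have h3 := N.aeval_self_charpoly
    rw [h2] at h3
    simpa using h3
  have hB3 : B ^ 3 = 1 := by
    have hB1N : B = 1 + N := by rw [hN, add_sub_cancel]
    rw [hB1N, add_pow_char_of_commute 3 (Commute.one_left N), one_pow, pow_succ, hN2, zero_mul,
      add_zero]
  have hA3 : (g : Matrix (Fin 2) (Fin 2) F9) ^ 3 =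
      Matrix.scalar (Fin 2) (c ^ 3) := by
    have : (g : Matrix (Fin 2) (Fin 2) F9) = c • B := by
      rw [hB, smul_smul, mul_inv_cancel₀ hc0, one_smul]
    rw [this, smul_pow, hB3, Matrix.scalar_apply, ← Matrix.smul_one_eq_diagonal]
  refine ⟨u ^ 3, ?_⟩
  refine Units.ext ?_
  show Matrix.scalar (Fin 2) ((u : F9) ^ 3) = (g ^ 3 : GL29).val
  rw [Units.val_pow_eq_pow_val, hA3]

lemma aux_fact3 : (Nat.card PGL29).factorization 3 = 2 := by
  rw [aux_card_PGL, show (720 : ℕ) = 3 ^ 2 * 80 by norm_num,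
    Nat.factorization_mul (by norm_num) (by norm_num)]
  rw [Nat.Prime.factorization_pow (by norm_num)]
  simp [Nat.factorization_eq_zero_of_not_dvd (by norm_num : ¬ (3 : ℕ) ∣ 80)]

theorem sylow_three_PGL29_elementaryAbelian (P : Sylow 3 PGL29) :
    Nat.card P = 9 ∧ (∀ a b : (P : Subgroup PGL29), a * b = b * a) ∧
    (∀ x : (P : Subgroup PGL29), x ^ 3 = 1) ∧
    ¬IsCyclic (P : Subgroup PGL29) := by
  haveI : Fact (Nat.Prime 3) := ⟨by norm_num⟩
  have hcard : Nat.card P = 9 := by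
    rw [Sylow.card_eq_multiplicity, aux_fact3]
    norm_num
  have hcomm : ∀ a b : (P : Subgroup PGL29), a * b = b * a :=
    IsPGroup.commutative_of_card_eq_prime_sq (p := 3) (hcard.trans (by norm_num))
  have hcube : ∀ x : (P : Subgroup PGL29), x ^ 3 = 1 := by
    intro x
    have h9 : x ^ 9 = 1 := by
      have := pow_card_eq_one' (G := (P : Subgroup PGL29)) (x := x)
      rwa [hcard] at this
    have h9' : ((x : PGL29)) ^ 9 = 1 := by
      have := congrArg (Subtype.val) h9
      simpa using this
    have h3' := aux_cube (x : PGL29) h9'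
    ext
    simpa using h3'
  refine ⟨hcard, hcomm, hcube, ?_⟩
  rintro h
  obtain ⟨g, hg⟩ := h.exists_generator
  have htop : Subgroup.zpowers g = ⊤ := (Subgroup.eq_top_iff' _).2 hg
  have hord : orderOf g = 9 := by
    rw [← Nat.card_zpowers, htop, Subgroup.card_top, hcard]
  have hdvd : orderOf g ∣ 3 := orderOf_dvd_of_pow_eq_one (hcube g)
  rw [hord] at hdvd
  omega
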